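/- arXiv:math/0502133 — 2 statements merged into one kernel-verified Lean document; each statement's English description precedes it below -/
import Mathlib

section
/- Let E/k be a totally ramified finite extension of p-adic fields of degree prime to p (tame). Then for every integer t ≥ 1 and every prime l ≠ p, the inclusion of unit groups O_k^* ⊆ O_E^* induces an isomorphism O_k^*/(O_k^*)^{l^t} → O_E^*/(O_E^*)^{l^t}. -/
open scoped Multiplicative
open scoped NNReal

local notation "ℤₘ₀" => WithZero (Multiplicative ℤ)

noncomputable section

/-- The group of units of a `ℤₘ₀`-valued valuation: the subgroup of `kˣ` consisting of
elements of valuation `1` (i.e. the units `O_k^*` of the valuation ring `O_k`). -/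
def Valuation.unitGroup' {k : Type*} [Field k] (v : Valuation k ℤₘ₀) : Subgroup kˣ where
  carrier := {u | v (u : k) = 1}
  one_mem' := by simp
  mul_mem' := by
    intro a b ha hb
    simp only [Set.mem_setOf_eq, Units.val_mul, map_mul] at *
    rw [ha, hb, one_mul]
  inv_mem' := by
    intro a ha
    simp only [Set.mem_setOf_eq] at *
    have h : v ((a : k)) * v ((a⁻¹ : kˣ) : k) = 1 := by
      rw [← map_mul]; norm_num
    rw [ha, one_mul] at h
    exact h

/-- The map on unit groups `O_k^* → O_E^*` induced by an embedding of valued fields,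
assuming units of the valuation ring map to units of the valuation ring. -/
def unitGroupMap {k E : Type*} [Field k] [Field E] [Algebra k E]
    (vk : Valuation k ℤₘ₀) (vE : Valuation E ℤₘ₀)
    (h : ∀ u : kˣ, u ∈ vk.unitGroup' → (Units.map (algebraMap k E : k →* E)) u ∈ vE.unitGroup') :
    vk.unitGroup' →* vE.unitGroup' :=
  MonoidHom.codRestrict ((Units.map (algebraMap k E : k →* E)).comp vk.unitGroup'.subtype)
    vE.unitGroup' (fun u => h u u.2)

/-- The induced map on quotients `O_k^*/(O_k^*)^m → O_E^*/(O_E^*)^m`. -/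
def unitGroupQuotMap {k E : Type*} [Field k] [Field E] [Algebra k E]
    (vk : Valuation k ℤₘ₀) (vE : Valuation E ℤₘ₀)
    (h : ∀ u : kˣ, u ∈ vk.unitGroup' → (Units.map (algebraMap k E : k →* E)) u ∈ vE.unitGroup')
    (m : ℕ) :
    vk.unitGroup' ⧸ (powMonoidHom m : vk.unitGroup' →* vk.unitGroup').range →*
      vE.unitGroup' ⧸ (powMonoidHom m : vE.unitGroup' →* vE.unitGroup').range :=
  QuotientGroup.map _ _ (unitGroupMap vk vE h) (by
    rintro x ⟨y, rfl⟩
    exact ⟨unitGroupMap vk vE h y, by simp [powMonoidHom_apply, map_pow]⟩)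

namespace CT

lemma norm_add_eq_left {K : Type*} [NormedField K] [IsUltrametricDist K]
    {a b : K} (h : ‖b‖ < ‖a‖) : ‖a + b‖ = ‖a‖ := by
  refine le_antisymm ((IsUltrametricDist.norm_add_le_max a b).trans (max_le le_rfl h.le)) ?_
  by_contra hlt
  push_neg at hlt
  have : ‖a‖ ≤ max ‖a + b‖ ‖b‖ := by
    simpa using IsUltrametricDist.norm_add_le_max (a + b) (-b)
  rcases max_cases ‖a + b‖ ‖b‖ with ⟨he, _⟩ | ⟨he, _⟩ <;> rw [he] at this
  · exact absurd (this.trans_lt hlt) (lt_irrefl _)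
  · exact absurd (this.trans_lt h) (lt_irrefl _)

lemma norm_eq_one_of_sub_lt {K : Type*} [NormedField K] [IsUltrametricDist K]
    {z : K} (h : ‖z - 1‖ < 1) : ‖z‖ = 1 := by
  have : ‖(1 : K) + (z - 1)‖ = ‖(1 : K)‖ := norm_add_eq_left (by simpa using h)
  simpa using this

theorem hensel_pow_root {K : Type*} [NormedField K] [CompleteSpace K] [IsUltrametricDist K]
    (m : ℕ) (hm : ‖(m : K)‖ = 1) (u : K) (hu : ‖u - 1‖ < 1) :
    ∃ z : K, z ^ m = u ∧ ‖z - 1‖ < 1 ∧ ‖z‖ = 1 := by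
  have hm0 : m ≠ 0 := by
    rintro rfl; simp at hm
  have hm1 : 1 ≤ m := Nat.one_le_iff_ne_zero.mpr hm0
  by_cases huone : u = 1
  · exact ⟨1, by simp [huone], by simpa using hu, by simp⟩
  set δ : ℝ := ‖u - 1‖ with hδdef
  have hδ0 : 0 < δ := by
    simpa [hδdef] using norm_pos_iff.mpr (sub_ne_zero.mpr huone)
  have hδ1 : δ < 1 := hu
  -- Newton iteration
  set F : K → K := fun z => z - (z ^ m - u) / ((m : K) * z ^ (m - 1)) with hF
  have hdnorm : ∀ z : K, ‖z‖ = 1 → ‖(m : K) * z ^ (m - 1)‖ = 1 := by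
    intro z hz
    rw [norm_mul, norm_pow, hz, one_pow, hm, mul_one]
  have hFsub : ∀ z : K, ‖z‖ = 1 → ‖F z - z‖ = ‖z ^ m - u‖ := by
    intro z hz
    have : F z - z = -((z ^ m - u) / ((m : K) * z ^ (m - 1))) := by
      simp [hF]
    rw [this, norm_neg, norm_div, hdnorm z hz, div_one]
  have hFmain : ∀ z : K, ‖z‖ = 1 → ‖z ^ m - u‖ ≤ 1 →
      ‖(F z) ^ m - u‖ ≤ ‖z ^ m - u‖ ^ 2 := by
    intro z hz he
    set d : K := (m : K) * z ^ (m - 1) with hd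
    have hdn : ‖d‖ = 1 := hdnorm z hz
    have hd0 : d ≠ 0 := by
      intro h; rw [h, norm_zero] at hdn; norm_num at hdn
    set h : K := -((z ^ m - u) / d) with hh
    have hFz : F z = z + h := by simp [hF, hh, sub_eq_add_neg, hd]
    have hnh : ‖h‖ = ‖z ^ m - u‖ := by rw [hh, norm_neg, norm_div, hdn, div_one]
    have hdh : d * h = -(z ^ m - u) := by
      rw [hh]; field_simp
    clear_value d h
    have expand : (z + h) ^ m =
        z ^ m + d * h + ∑ j ∈ Finset.Ico 2 (m + 1), h ^ j * z ^ (m - j) * (m.choose j : K) := by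
      rw [add_comm z h, add_pow]
      have hsplit := Finset.sum_range_add_sum_Ico
        (fun j => h ^ j * z ^ (m - j) * (m.choose j : K)) (by omega : 2 ≤ m + 1)
      rw [← hsplit, Finset.sum_range_succ, Finset.sum_range_one]
      have h1 : m.choose 0 = 1 := Nat.choose_zero_right m
      have h2 : m.choose 1 = m := Nat.choose_one_right m
      congr 1
      simp only [h1, h2, pow_zero, pow_one, Nat.sub_zero, Nat.cast_one, one_mul, mul_one]
      rw [hd]
      ring
    have hfinal : (F z) ^ m - u =
        ∑ j ∈ Finset.Ico 2 (m + 1), h ^ j * z ^ (m - j) * (m.choose j : K) := by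
      rw [hFz, expand, hdh]; ring
    rw [hfinal]
    apply IsUltrametricDist.norm_sum_le_of_forall_le_of_nonneg (by positivity)
    intro j hj
    rw [Finset.mem_Ico] at hj
    have hnorm_j : ‖h ^ j * z ^ (m - j) * (m.choose j : K)‖
        = ‖z ^ m - u‖ ^ j * 1 * ‖(m.choose j : K)‖ := by
      rw [norm_mul, norm_mul, norm_pow, norm_pow, hnh, hz, one_pow]
    rw [hnorm_j, mul_one]
    have h1 : ‖z ^ m - u‖ ^ j * ‖(m.choose j : K)‖ ≤ ‖z ^ m - u‖ ^ j * 1 :=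
      mul_le_mul_of_nonneg_left (IsUltrametricDist.norm_natCast_le_one K _) (by positivity)
    refine h1.trans ?_
    rw [mul_one]
    exact pow_le_pow_of_le_one (norm_nonneg _) he hj.1
  have hF1 : ∀ z : K, ‖z - 1‖ ≤ δ → ‖z ^ m - u‖ ≤ δ → ‖F z - 1‖ ≤ δ := by
    intro z h1 h2
    have hz : ‖z‖ = 1 := norm_eq_one_of_sub_lt (h1.trans_lt hδ1)
    have he : F z - 1 = (z - 1) + (F z - z) := by ring
    rw [he]
    refine (IsUltrametricDist.norm_add_le_max _ _).trans (max_le h1 ?_)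
    rw [hFsub z hz]; exact h2
  set zs : ℕ → K := fun n => F^[n] 1 with hzs
  have inv : ∀ n, ‖zs n - 1‖ ≤ δ ∧ ‖zs n ^ m - u‖ ≤ δ ^ (n + 1) := by
    intro n
    induction n with
    | zero =>
      refine ⟨by simp [hzs]; exact hδ0.le, ?_⟩
      simp [hzs, norm_sub_rev]; exact le_of_eq hδdef.symm
    | succ n ih =>
      have hs : zs (n + 1) = F (zs n) := Function.iterate_succ_apply' F n 1
      have hdd : δ ^ (n + 1) ≤ δ := by
        calc δ ^ (n + 1) ≤ δ ^ 1 := pow_le_pow_of_le_one hδ0.le hδ1.le (by omega)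
          _ = δ := pow_one δ
      have h2 : ‖zs n ^ m - u‖ ≤ δ := ih.2.trans hdd
      have hz : ‖zs n‖ = 1 := norm_eq_one_of_sub_lt (ih.1.trans_lt hδ1)
      refine ⟨by rw [hs]; exact hF1 _ ih.1 h2, ?_⟩
      rw [hs]
      refine (hFmain _ hz (h2.trans hδ1.le)).trans ?_
      calc ‖zs n ^ m - u‖ ^ 2 ≤ (δ ^ (n + 1)) ^ 2 :=
            pow_le_pow_left₀ (norm_nonneg _) ih.2 2
        _ = δ ^ (2 * (n + 1)) := by rw [← pow_mul, mul_comm]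
        _ ≤ δ ^ (n + 2) := pow_le_pow_of_le_one hδ0.le hδ1.le (by omega)
  have hcauchy : CauchySeq zs := by
    apply cauchySeq_of_le_geometric δ δ hδ1
    intro n
    have hz : ‖zs n‖ = 1 := norm_eq_one_of_sub_lt ((inv n).1.trans_lt hδ1)
    have hs : zs (n + 1) = F (zs n) := Function.iterate_succ_apply' F n 1
    rw [dist_eq_norm, hs, norm_sub_rev, hFsub _ hz]
    calc ‖zs n ^ m - u‖ ≤ δ ^ (n + 1) := (inv n).2
      _ = δ * δ ^ n := by rw [pow_succ, mul_comm]
  obtain ⟨z, hz⟩ := cauchySeq_tendsto_of_complete hcauchy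
  have t1 : Filter.Tendsto (fun n => zs n ^ m) Filter.atTop (nhds (z ^ m)) := hz.pow m
  have t2 : Filter.Tendsto (fun n => zs n ^ m) Filter.atTop (nhds u) := by
    rw [tendsto_iff_dist_tendsto_zero]
    refine squeeze_zero (fun n => dist_nonneg) (fun n => ?_) ?_ (g := fun n => δ ^ (n + 1))
    · rw [dist_eq_norm]; exact (inv n).2
    · exact (tendsto_pow_atTop_nhds_zero_of_lt_one hδ0.le hδ1).comp (Filter.tendsto_add_atTop_nat 1)
  have hzm : z ^ m = u := tendsto_nhds_unique t1 t2
  have hmem : ‖z - 1‖ ≤ δ := by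
    have hcl : IsClosed (Metric.closedBall (1 : K) δ) := Metric.isClosed_closedBall
    have := hcl.mem_of_tendsto hz (Filter.Eventually.of_forall fun n => by
      simpa [Metric.mem_closedBall, dist_eq_norm] using (inv n).1)
    simpa [Metric.mem_closedBall, dist_eq_norm] using this
  exact ⟨z, hzm, hmem.trans_lt hδ1, norm_eq_one_of_sub_lt (hmem.trans_lt hδ1)⟩

theorem approx {k E : Type*} [Field k] [Field E] [Algebra k E] [FiniteDimensional k E]
    (vk : Valuation k ℤₘ₀) (vE : Valuation E ℤₘ₀) (hvE : Function.Surjective vE)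
    (htot : ∀ x : k, vE (algebraMap k E x) = (vk x) ^ (Module.finrank k E))
    (u : E) (hu : vE u = 1) :
    ∃ z : k, vk z = 1 ∧ vE (u - algebraMap k E z) < 1 := by
  classical
  by_contra hcon
  push_neg at hcon
  set n := Module.finrank k E with hn
  have hn0 : 0 < n := Module.finrank_pos
  set A := algebraMap k E with hA
  -- key : valuation of a + b * u
  have key : ∀ a b : k, vE (A a + A b * u) = max (vk a) (vk b) ^ n := by
    intro a b
    have hmaxpow : ∀ x y : ℤₘ₀, max (x ^ n) (y ^ n) = max x y ^ n := by
      intro x y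
      rcases le_total x y with h | h
      · rw [max_eq_right (pow_le_pow_left' h n), max_eq_right h]
      · rw [max_eq_left (pow_le_pow_left' h n), max_eq_left h]
    by_cases hb : b = 0
    · rw [hb, map_zero, zero_mul, add_zero, htot, ← hmaxpow, map_zero,
        zero_pow hn0.ne', max_eq_left zero_le']
    set c : k := -(a / b) with hc
    have hcc0 : b * c = -a := by rw [hc]; field_simp
    have hbc : A b * A c = - A a := by
      rw [← map_mul, hcc0, map_neg]
    have hsplit : A a + A b * u = A b * (u - A c) := by
      rw [mul_sub, hbc]; ring
    have hsub : vE (u - A c) = max 1 (vk c ^ n) := by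
      rcases lt_trichotomy (vk c) 1 with hlt | heq | hgt
      · have h1 : vE (A c) < 1 := by rw [htot]; exact (pow_lt_one_iff hn0.ne').mpr hlt
        rw [max_eq_left ((pow_lt_one_iff hn0.ne').mpr hlt).le]
        rw [← hu] at h1 ⊢
        exact vE.map_sub_eq_of_lt_left h1
      · have h2 := hcon c heq
        have h3 : vE (u - A c) ≤ 1 := by
          refine (vE.map_sub u (A c)).trans ?_
          rw [hu, htot, heq, one_pow, max_self]
        rw [heq, one_pow, max_self]
        exact le_antisymm h3 h2
      · have h1 : 1 < vE (A c) := by rw [htot]; exact one_lt_pow₀ hgt hn0.ne'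
        rw [max_eq_right (one_lt_pow₀ hgt hn0.ne').le]
        rw [← hu] at h1
        have := vE.map_sub_eq_of_lt_right h1
        rw [this, htot]
    have hcc : b * c = -a := hcc0
    rw [hsplit, map_mul, hsub, htot, mul_max, mul_one, ← mul_pow, ← vk.map_mul, hcc,
      vk.map_neg, hmaxpow, max_comm (vk b) (vk a)]
  -- a uniformizer of E
  obtain ⟨π, hπ⟩ := hvE (↑(Multiplicative.ofAdd (-1 : ℤ)) : ℤₘ₀)
  -- the 2n elements
  set f : Fin n ⊕ Fin n → E :=
    Sum.elim (fun j => π ^ (j : ℕ)) (fun j => u * π ^ (j : ℕ)) with hf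
  have hlin : LinearIndependent k f := by
    rw [Fintype.linearIndependent_iff]
    intro g hg
    by_contra hne
    push_neg at hne
    obtain ⟨i0, hi0⟩ := hne
    set a : Fin n → k := fun j => g (Sum.inl j) with ha
    set b : Fin n → k := fun j => g (Sum.inr j) with hb
    set T : Fin n → E := fun j => (A (a j) + A (b j) * u) * π ^ (j : ℕ) with hT
    have hval : ∀ j : Fin n, vE (T j) =
        max (vk (a j)) (vk (b j)) ^ n * (↑(Multiplicative.ofAdd (-1 : ℤ)) : ℤₘ₀) ^ (j : ℕ) := by
      intro j
      rw [hT]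
      simp only
      rw [vE.map_mul, key, vE.map_pow, hπ]
    have hsum : ∑ j : Fin n, T j = 0 := by
      have hTg : ∀ j : Fin n, T j
          = g (Sum.inl j) • (π ^ (j : ℕ)) + g (Sum.inr j) • (u * π ^ (j : ℕ)) := by
        intro j
        rw [hT]
        simp only [Algebra.smul_def, ha, hb]
        ring
      rw [Finset.sum_congr rfl (fun j _ => hTg j), Finset.sum_add_distrib]
      rw [Fintype.sum_sum_type] at hg
      exact hg
    set S : Finset (Fin n) := Finset.univ.filter (fun j => a j ≠ 0 ∨ b j ≠ 0) with hS
    have hSne : S.Nonempty := by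
      rcases i0 with j | j
      · exact ⟨j, Finset.mem_filter.mpr ⟨Finset.mem_univ _, Or.inl hi0⟩⟩
      · exact ⟨j, Finset.mem_filter.mpr ⟨Finset.mem_univ _, Or.inr hi0⟩⟩
    have hT0 : ∀ j ∈ Finset.univ, j ∉ S → T j = 0 := by
      intro j _ hj
      simp only [hS, Finset.mem_filter, Finset.mem_univ, true_and, not_or, not_not] at hj
      rw [hT]
      simp [hj.1, hj.2]
    have hTne : ∀ j ∈ S, vE (T j) ≠ 0 := by
      intro j hj
      simp only [hS, Finset.mem_filter, Finset.mem_univ, true_and] at hj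
      have hmne : max (vk (a j)) (vk (b j)) ≠ 0 := by
        intro h0
        rcases hj with h | h
        · exact absurd (le_zero_iff.mp ((le_max_left _ _).trans_eq h0))
            ((Valuation.ne_zero_iff vk).mpr h)
        · exact absurd (le_zero_iff.mp ((le_max_right _ _).trans_eq h0))
            ((Valuation.ne_zero_iff vk).mpr h)
      rw [hval j]
      exact mul_ne_zero (pow_ne_zero _ hmne) (pow_ne_zero _ (WithZero.coe_ne_zero))
    have hinj : ∀ j ∈ S, ∀ j' ∈ S, vE (T j) = vE (T j') → j = j' := by
      intro j hj j' hj' heq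
      obtain ⟨s, hs⟩ := WithZero.ne_zero_iff_exists.mp (by
        intro h0
        rcases (Finset.mem_filter.mp hj).2 with h | h
        · exact absurd (le_zero_iff.mp ((le_max_left _ _).trans_eq h0))
            ((Valuation.ne_zero_iff vk).mpr h)
        · exact absurd (le_zero_iff.mp ((le_max_right _ _).trans_eq h0))
            ((Valuation.ne_zero_iff vk).mpr h) :
          max (vk (a j)) (vk (b j)) ≠ 0)
      obtain ⟨s', hs'⟩ := WithZero.ne_zero_iff_exists.mp (by
        intro h0
        rcases (Finset.mem_filter.mp hj').2 with h | h
        · exact absurd (le_zero_iff.mp ((le_max_left _ _).trans_eq h0))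
            ((Valuation.ne_zero_iff vk).mpr h)
        · exact absurd (le_zero_iff.mp ((le_max_right _ _).trans_eq h0))
            ((Valuation.ne_zero_iff vk).mpr h) :
          max (vk (a j')) (vk (b j')) ≠ 0)
      rw [hval j, hval j', ← hs, ← hs', ← WithZero.coe_pow, ← WithZero.coe_pow,
        ← WithZero.coe_pow, ← WithZero.coe_pow, ← WithZero.coe_mul, ← WithZero.coe_mul,
        WithZero.coe_inj] at heq
      have heq2 := congrArg Multiplicative.toAdd heq
      simp only [toAdd_mul, toAdd_pow, toAdd_ofAdd, nsmul_eq_mul, smul_eq_mul, mul_neg,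
        mul_one] at heq2
      have hdvd : (n : ℤ) ∣ (j : ℤ) - (j' : ℤ) :=
        ⟨s.toAdd - s'.toAdd, by push_cast at heq2 ⊢; linarith⟩
      have habs : |(j : ℤ) - (j' : ℤ)| < n := by
        have h1 : (j : ℤ) < n := by exact_mod_cast j.2
        have h2 : (j' : ℤ) < n := by exact_mod_cast j'.2
        have h3 : 0 ≤ (j : ℤ) := Int.natCast_nonneg _
        have h4 : 0 ≤ (j' : ℤ) := Int.natCast_nonneg _
        rw [abs_lt]; omega
      have := Int.eq_zero_of_abs_lt_dvd hdvd habs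
      have : (j : ℤ) = (j' : ℤ) := by omega
      exact Fin.ext (by exact_mod_cast this)
    obtain ⟨j0, hj0S, hj0max⟩ := Finset.exists_max_image S (fun j => vE (T j)) hSne
    have hrest : vE (∑ j ∈ S.erase j0, T j) < vE (T j0) := by
      refine vE.map_sum_lt (hTne j0 hj0S) ?_
      intro j hj
      have hjS : j ∈ S := Finset.mem_of_mem_erase hj
      refine lt_of_le_of_ne (hj0max j hjS) ?_
      intro h
      exact (Finset.ne_of_mem_erase hj) (hinj j hjS j0 hj0S h)
    have htotal : vE (∑ j ∈ S, T j) = vE (T j0) := by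
      rw [← Finset.add_sum_erase S T hj0S]
      exact vE.map_add_eq_of_lt_left hrest
    have hzero : (∑ j ∈ S, T j) = 0 := by
      rw [Finset.sum_subset (Finset.subset_univ S) hT0]
      exact hsum
    rw [hzero, vE.map_zero] at htotal
    exact (hTne j0 hj0S) htotal.symm
  have hcard := hlin.fintype_card_le_finrank
  rw [Fintype.card_sum, Fintype.card_fin] at hcard
  omega

theorem hensel_val {p : ℕ} [Fact p.Prime] {K : Type*} [Field K]
    [Algebra ℚ_[p] K] [FiniteDimensional ℚ_[p] K]
    (v : Valuation K ℤₘ₀) (hv : Function.Surjective v)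
    (hlt : ∀ x : ℚ_[p], ‖x‖ < 1 → v (algebraMap ℚ_[p] K x) < 1)
    (m : ℕ) (hm : v ((m : ℕ) : K) = 1)
    (u : K) (hu : v (u - 1) < 1) :
    ∃ z : K, v z = 1 ∧ z ^ m = u := by
  letI val : Valued K ℤₘ₀ := Valued.mk' v
  obtain ⟨x0, hx0⟩ := hv (↑(Multiplicative.ofAdd (-1 : ℤ)) : ℤₘ₀)
  letI : Valuation.RankOne (val.v) :=
    { hom' := (WithZeroMulInt.toNNReal (by norm_num : (2 : ℝ≥0) ≠ 0)).comp
          MonoidWithZeroHom.ValueGroup₀.embedding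
      strictMono' := (WithZeroMulInt.toNNReal_strictMono (by norm_num : (1 : ℝ≥0) < 2)).comp
          MonoidWithZeroHom.ValueGroup₀.embedding_strictMono
      exists_val_nontrivial := ⟨x0, by
        show v x0 ≠ 0
        rw [hx0]; exact WithZero.coe_ne_zero, by
        show v x0 ≠ 1
        rw [hx0]
        intro h
        rw [← WithZero.coe_one, WithZero.coe_inj] at h
        exact absurd (congrArg Multiplicative.toAdd h) (by norm_num)⟩ }
  letI : NormedField K := Valued.toNormedField K ℤₘ₀
  haveI : IsUltrametricDist K := inferInstance
  have hveq : (val.v : Valuation K ℤₘ₀) = v := rfl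
  have hlt1 : ∀ x : K, ‖x‖ < 1 ↔ v x < 1 := fun x => Valued.toNormedField.norm_lt_one_iff
  have heq1 : ∀ x : K, ‖x‖ = 1 ↔ v x = 1 := by
    intro x
    constructor
    · intro h
      have h1 := le_antisymm ((Valued.toNormedField.norm_le_one_iff).mp h.le)
        ((Valued.toNormedField.one_le_norm_iff).mp h.ge)
      exact h1
    · intro h
      have := (Valued.toNormedField.norm_le_one_iff (x := x)).mpr h.le
      have h2 := (Valued.toNormedField.one_le_norm_iff (x := x)).mpr h.ge
      linarith
  -- continuity of the algebra map
  have hcont : Continuous (algebraMap ℚ_[p] K) := by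
    rw [Metric.continuous_iff]
    intro x ε hε
    set c : ℝ := ‖algebraMap ℚ_[p] K (p : ℚ_[p])‖ with hc
    have hc0 : 0 ≤ c := norm_nonneg _
    have hc1 : c < 1 := (hlt1 _).mpr (hlt _ Padic.norm_p_lt_one)
    obtain ⟨M, hM⟩ := exists_pow_lt_of_lt_one hε hc1
    have hp0 : (0 : ℝ) < (p : ℝ) := by
      exact_mod_cast (Fact.out : p.Prime).pos
    refine ⟨((p : ℝ)⁻¹) ^ M, by positivity, ?_⟩
    intro y hy
    rw [dist_eq_norm, ← map_sub]
    set w : ℚ_[p] := y - x with hw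
    have hwn : ‖w‖ < ((p : ℝ)⁻¹) ^ M := by rwa [dist_eq_norm] at hy
    have hpK : ((p : ℚ_[p]) ^ M) ≠ 0 := by
      apply pow_ne_zero
      exact_mod_cast (Fact.out : p.Prime).ne_zero
    set b : ℚ_[p] := w * ((p : ℚ_[p]) ^ M)⁻¹ with hb
    have hbn : ‖b‖ < 1 := by
      rw [hb, norm_mul, norm_inv, norm_pow, Padic.norm_p]
      calc ‖w‖ * (((p : ℝ)⁻¹) ^ M)⁻¹ < ((p : ℝ)⁻¹) ^ M * (((p : ℝ)⁻¹) ^ M)⁻¹ := by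
            apply mul_lt_mul_of_pos_right hwn
            positivity
        _ = 1 := mul_inv_cancel₀ (by positivity)
    have hwb : w = b * (p : ℚ_[p]) ^ M := by
      rw [hb, mul_assoc, inv_mul_cancel₀ hpK, mul_one]
    have hbK : ‖algebraMap ℚ_[p] K b‖ ≤ 1 := ((hlt1 _).mpr (hlt b hbn)).le
    calc ‖algebraMap ℚ_[p] K w‖ = ‖algebraMap ℚ_[p] K b‖ * c ^ M := by
          rw [hwb, map_mul, map_pow, norm_mul, norm_pow]
      _ ≤ 1 * c ^ M := by
          apply mul_le_mul_of_nonneg_right hbK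
          positivity
      _ = c ^ M := one_mul _
      _ < ε := hM
  haveI : ContinuousSMul ℚ_[p] K := by
    refine ⟨?_⟩
    have hfun : (fun q : ℚ_[p] × K => q.1 • q.2)
        = fun q : ℚ_[p] × K => algebraMap ℚ_[p] K q.1 * q.2 :=
      funext fun q => Algebra.smul_def q.1 q.2
    rw [hfun]
    exact (hcont.comp continuous_fst).mul continuous_snd
  haveI : CompleteSpace K := FiniteDimensional.complete ℚ_[p] K
  have hm' : ‖((m : ℕ) : K)‖ = 1 := (heq1 _).mpr hm
  obtain ⟨z, hz1, _, hz3⟩ := CT.hensel_pow_root m hm' u ((hlt1 _).mpr hu)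
  exact ⟨z, (heq1 _).mp hz3, hz1⟩

theorem assembly {k E : Type*} [Field k] [Field E] [Algebra k E]
    (vk : Valuation k ℤₘ₀) (vE : Valuation E ℤₘ₀)
    (hunits : ∀ u : kˣ, u ∈ vk.unitGroup' →
      (Units.map (algebraMap k E : k →* E)) u ∈ vE.unitGroup')
    (m : ℕ) (hm0 : m ≠ 0)
    (ht1 : ∀ x : k, vE (algebraMap k E x) = 1 ↔ vk x = 1)
    (htlt : ∀ x : k, vE (algebraMap k E x) < 1 ↔ vk x < 1)
    (approx : ∀ u : E, vE u = 1 → ∃ z : k, vk z = 1 ∧ vE (u - algebraMap k E z) < 1)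
    (Hk : ∀ u : k, vk u = 1 → vk (u - 1) < 1 → ∃ z : k, vk z = 1 ∧ z ^ m = u)
    (HE : ∀ u : E, vE u = 1 → vE (u - 1) < 1 → ∃ z : E, vE z = 1 ∧ z ^ m = u) :
    Function.Bijective (unitGroupQuotMap vk vE hunits m) := by
  have hmem_k : ∀ x : vk.unitGroup', vk ((x : kˣ) : k) = 1 := fun x => x.2
  have hmem_E : ∀ x : vE.unitGroup', vE ((x : Eˣ) : E) = 1 := fun x => x.2
  constructor
  · -- injectivity
    intro qa qb hab
    obtain ⟨x, rfl⟩ := QuotientGroup.mk'_surjective _ qa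
    obtain ⟨y, rfl⟩ := QuotientGroup.mk'_surjective _ qb
    rw [QuotientGroup.mk'_apply, QuotientGroup.mk'_apply] at hab ⊢
    simp only [unitGroupQuotMap, QuotientGroup.map_mk] at hab
    rw [QuotientGroup.eq] at hab ⊢
    obtain ⟨W, hW⟩ := hab
    -- underlying equation in E
    set g : vk.unitGroup' := x⁻¹ * y with hg
    have hfg : (unitGroupMap vk vE hunits g) = (powMonoidHom m) W := by
      rw [hg, map_mul, map_inv]
      exact hW.symm
    have hEeq : algebraMap k E ((g : kˣ) : k) = (((W : Eˣ) : E)) ^ m := by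
      have := congrArg (fun t : vE.unitGroup' => ((t : Eˣ) : E)) hfg
      simpa [unitGroupMap, powMonoidHom, MonoidHom.codRestrict] using this
    set uu : k := ((g : kˣ) : k) with huu
    set w : E := ((W : Eˣ) : E) with hwdef
    have huu1 : vk uu = 1 := hmem_k g
    have hw1 : vE w = 1 := hmem_E W
    obtain ⟨z, hz1, hz2⟩ := approx w hw1
    have hz0 : z ≠ 0 := by
      intro h; rw [h, map_zero] at hz1; exact zero_ne_one hz1
    -- vE (w^m - (A z)^m) < 1
    have hfactor : w ^ m - (algebraMap k E z) ^ m
        = (∑ i ∈ Finset.range m, w ^ i * (algebraMap k E z) ^ (m - 1 - i)) * (w - algebraMap k E z) := by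
      rw [geom_sum₂_mul]
    have hsumle : vE (∑ i ∈ Finset.range m, w ^ i * (algebraMap k E z) ^ (m - 1 - i)) ≤ 1 := by
      apply Valuation.map_sum_le
      intro i _
      rw [map_mul, map_pow, map_pow, hw1, (ht1 z).mpr hz1, one_pow, one_pow, one_mul]
    have hpowlt : vE (w ^ m - (algebraMap k E z) ^ m) < 1 := by
      rw [hfactor, map_mul]
      calc vE _ * vE (w - algebraMap k E z) ≤ 1 * vE (w - algebraMap k E z) :=
            mul_le_mul_left hsumle _
        _ = vE (w - algebraMap k E z) := one_mul _
        _ < 1 := hz2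
    have hklt : vk (uu - z ^ m) < 1 := by
      rw [← htlt, map_sub, map_pow, hEeq]
      exact hpowlt
    -- Hensel in k for uu / z^m
    have hzm1 : vk (z ^ m) = 1 := by rw [map_pow, hz1, one_pow]
    have hzm0 : z ^ m ≠ 0 := pow_ne_zero _ hz0
    have hq1 : vk (uu / z ^ m) = 1 := by
      rw [map_div₀, huu1, hzm1, div_one]
    have hqlt : vk (uu / z ^ m - 1) < 1 := by
      have : uu / z ^ m - 1 = (uu - z ^ m) / z ^ m := by field_simp
      rw [this, map_div₀, hzm1, div_one]
      exact hklt
    obtain ⟨y0, hy01, hy02⟩ := Hk _ hq1 hqlt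
    have hufin : (y0 * z) ^ m = uu := by
      rw [mul_pow, hy02]
      field_simp
    have huu0 : uu ≠ 0 := Units.ne_zero _
    have hyz0 : y0 * z ≠ 0 := by
      intro h
      rw [h, zero_pow hm0] at hufin
      exact huu0 hufin.symm
    have hG1 : vk ((Units.mk0 (y0 * z) hyz0 : kˣ) : k) = 1 := by
      show vk (y0 * z) = 1
      rw [map_mul, hy01, hz1, one_mul]
    refine ⟨⟨Units.mk0 (y0 * z) hyz0, hG1⟩, ?_⟩
    apply Subtype.ext
    apply Units.ext
    show ((y0 * z) ^ m : k) = _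
    rw [hufin]
  · -- surjectivity
    intro q
    obtain ⟨W, rfl⟩ := QuotientGroup.mk'_surjective _ q
    set w : E := ((W : Eˣ) : E) with hwdef
    have hw1 : vE w = 1 := hmem_E W
    obtain ⟨z, hz1, hz2⟩ := approx w hw1
    have hz0 : z ≠ 0 := by
      intro h; rw [h, map_zero] at hz1; exact zero_ne_one hz1
    set zu : kˣ := Units.mk0 z hz0 with hzu
    have hzmem : zu ∈ vk.unitGroup' := hz1
    have hAz1 : vE (algebraMap k E z) = 1 := (ht1 z).mpr hz1
    have hAz0 : algebraMap k E z ≠ 0 := by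
      intro h; rw [h, map_zero] at hAz1; exact zero_ne_one hAz1
    have hc1 : vE (w / algebraMap k E z) = 1 := by
      rw [map_div₀, hw1, hAz1, div_one]
    have hclt : vE (w / algebraMap k E z - 1) < 1 := by
      have : w / algebraMap k E z - 1 = (w - algebraMap k E z) / algebraMap k E z := by
        field_simp
      rw [this, map_div₀, hAz1, div_one]
      exact hz2
    obtain ⟨y, hy1, hy2⟩ := HE _ hc1 hclt
    have hy0 : y ≠ 0 := by
      intro h; rw [h, map_zero] at hy1; exact zero_ne_one hy1
    set yu : Eˣ := Units.mk0 y hy0 with hyu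
    have hymem : yu ∈ vE.unitGroup' := hy1
    refine ⟨QuotientGroup.mk' _ ⟨zu, hzmem⟩, ?_⟩
    rw [QuotientGroup.mk'_apply, QuotientGroup.mk'_apply]
    simp only [unitGroupQuotMap, QuotientGroup.map_mk]
    rw [QuotientGroup.eq]
    refine ⟨(⟨yu, hymem⟩ : vE.unitGroup'), ?_⟩
    apply Subtype.ext
    apply Units.ext
    show (y ^ m : E) = _
    rw [hy2, div_eq_inv_mul]
    simp only [unitGroupMap, MonoidHom.codRestrict, hwdef]
    simp [hzu]

end CT

/-- **Tame totally ramified extensions induce isomorphisms on units modulo `l`-power powers**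
(used in the proofs of Lemme 7 and Lemme 8 of Colliot-Thélène's article).

Let `k` be a `p`-adic field and `E/k` a finite *totally ramified* extension of degree prime
to `p` (tame).  Then for every integer `t ≥ 1` and every prime `l ≠ p`, the inclusion of unit
groups `O_k^* ⊆ O_E^*` induces an isomorphism `O_k^*/(O_k^*)^{l^t} ≃ O_E^*/(O_E^*)^{l^t}`.

Here `vk`, `vE` are the normalized (surjective) `ℤₘ₀`-valued valuations of `k` and `E`;
the hypothesis `hpin` pins `vk` down to be the `p`-adic valuation, and total ramification of
`E/k` is expressed by `vE(x) = vk(x)^[E:k]` for `x ∈ k`. -/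
theorem units_mod_lpow_iso_of_tame_totally_ramified
    (p l : ℕ) [Fact p.Prime] (hl : l.Prime) (hlp : l ≠ p) (t : ℕ) (ht : 1 ≤ t)
    (k E : Type) [Field k] [Field E]
    [Algebra ℚ_[p] k] [FiniteDimensional ℚ_[p] k]
    [Algebra k E] [FiniteDimensional k E]
    (vk : Valuation k ℤₘ₀) (vE : Valuation E ℤₘ₀)
    (hvk : Function.Surjective vk) (hvE : Function.Surjective vE)
    (hpin : ∀ x : ℚ_[p], vk (algebraMap ℚ_[p] k x) < 1 ↔ ‖x‖ < 1)
    (htot : ∀ x : k, vE (algebraMap k E x) = (vk x) ^ (Module.finrank k E))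
    (htame : (Module.finrank k E).Coprime p)
    (hunits : ∀ u : kˣ, u ∈ vk.unitGroup' →
      (Units.map (algebraMap k E : k →* E)) u ∈ vE.unitGroup') :
    Function.Bijective (unitGroupQuotMap vk vE hunits (l ^ t)) := by
  have hn0 : 0 < Module.finrank k E := Module.finrank_pos
  have htlt : ∀ x : k, vE (algebraMap k E x) < 1 ↔ vk x < 1 := by
    intro x; rw [htot]; exact pow_lt_one_iff hn0.ne'
  have ht1 : ∀ x : k, vE (algebraMap k E x) = 1 ↔ vk x = 1 := by
    intro x; rw [htot]; exact pow_eq_one_iff.trans (or_iff_left hn0.ne')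
  have happrox := CT.approx vk vE hvE htot
  -- `l` has norm 1 in `ℚ_p`
  have hnormlQ : ‖((l : ℕ) : ℚ_[p])‖ = 1 := by
    have hle : ‖(((l : ℤ)) : ℚ_[p])‖ ≤ 1 := Padic.norm_int_le_one _
    have hdvd : ¬ ((p : ℤ) ∣ (l : ℤ)) := by
      rw [Int.natCast_dvd_natCast]
      intro hd
      exact hlp ((Nat.prime_dvd_prime_iff_eq (Fact.out) hl).mp hd).symm
    have hnlt : ¬ ‖(((l : ℤ)) : ℚ_[p])‖ < 1 := by
      rw [Padic.norm_intCast_lt_one_iff]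
      exact hdvd
    have : ‖(((l : ℤ)) : ℚ_[p])‖ = 1 := le_antisymm hle (not_lt.mp hnlt)
    simpa using this
  have hl0Q : ((l : ℕ) : ℚ_[p]) ≠ 0 := by
    intro h; rw [h, norm_zero] at hnormlQ; norm_num at hnormlQ
  have hlk : vk ((l : ℕ) : k) = 1 := by
    have hcast : ((l : ℕ) : k) = algebraMap ℚ_[p] k ((l : ℕ) : ℚ_[p]) := (map_natCast _ _).symm
    have h1 : ¬ vk ((l : ℕ) : k) < 1 := by
      rw [hcast, hpin, hnormlQ]; exact lt_irrefl 1
    have h2 : ¬ (vk ((l : ℕ) : k))⁻¹ < 1 := by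
      rw [hcast, ← map_inv₀ vk, ← map_inv₀ (algebraMap ℚ_[p] k), hpin, norm_inv, hnormlQ]
      norm_num
    have ha : (1 : ℤₘ₀) ≤ vk ((l : ℕ) : k) := not_lt.mp h1
    have hb : (1 : ℤₘ₀) ≤ (vk ((l : ℕ) : k))⁻¹ := not_lt.mp h2
    rcases ha.lt_or_eq with hlt | heq
    · exact absurd (inv_lt_one_of_one_lt₀ hlt) (not_lt.mpr hb)
    · exact heq.symm
  have hlE : vE ((l : ℕ) : E) = 1 := by
    have hcast : ((l : ℕ) : E) = algebraMap k E ((l : ℕ) : k) := (map_natCast _ _).symm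
    rw [hcast, ht1]
    exact hlk
  have hmk : vk (((l ^ t : ℕ)) : k) = 1 := by
    push_cast
    rw [map_pow, hlk, one_pow]
  have hmE : vE (((l ^ t : ℕ)) : E) = 1 := by
    push_cast
    rw [map_pow, hlE, one_pow]
  have hlt_k : ∀ x : ℚ_[p], ‖x‖ < 1 → vk (algebraMap ℚ_[p] k x) < 1 :=
    fun x h => (hpin x).mpr h
  letI : Algebra ℚ_[p] E := ((algebraMap k E).comp (algebraMap ℚ_[p] k)).toAlgebra
  letI : IsScalarTower ℚ_[p] k E := IsScalarTower.of_algebraMap_eq fun x => rfl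
  haveI : FiniteDimensional ℚ_[p] E := FiniteDimensional.trans ℚ_[p] k E
  have halgE : ∀ x : ℚ_[p],
      algebraMap ℚ_[p] E x = algebraMap k E (algebraMap ℚ_[p] k x) := fun x => rfl
  have hlt_E : ∀ x : ℚ_[p], ‖x‖ < 1 → vE (algebraMap ℚ_[p] E x) < 1 := by
    intro x h
    rw [halgE, htot]
    exact (pow_lt_one_iff hn0.ne').mpr ((hpin x).mpr h)
  have Hk : ∀ u : k, vk u = 1 → vk (u - 1) < 1 → ∃ z : k, vk z = 1 ∧ z ^ (l ^ t) = u :=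
    fun u _ hu2 => CT.hensel_val vk hvk hlt_k (l ^ t) hmk u hu2
  have HE : ∀ u : E, vE u = 1 → vE (u - 1) < 1 → ∃ z : E, vE z = 1 ∧ z ^ (l ^ t) = u :=
    fun u _ hu2 => CT.hensel_val vE hvE hlt_E (l ^ t) hmE u hu2
  exact CT.assembly vk vE hunits (l ^ t) (pow_ne_zero t hl.pos.ne') ht1 htlt happrox Hk HE
end
end

section
/- Let k be a p-adic field and X a smooth projective rationally connected k-variety. If the group A_0(X) is finite, then there exists an integer m ≥ 1 such that every zero-cycle on X of degree at least m is rationally equivalent to an effective zero-cycle. -/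
noncomputable section

/-! ### An interface for zero-cycles on smooth projective varieties

Chow groups of zero-cycles are not available in Mathlib.  We axiomatize, as a structure,
the standard theory of zero-cycles on smooth projective (geometrically integral) varieties
over field extensions of a base field `k`: varieties, closed points and their degrees,
rational points, `R`-equivalence, the Chow group `CH₀` as a quotient of the group of
zero-cycles, the degree map, extension of scalars, and the flat pullback and proper
pushforward maps attached to a finite extension of base fields, with their standard degree
compatibilities. -/
structure ZeroCycleTheory (k : Type) [Field k] : Type 2 where
  /-- smooth projective geometrically integral varieties over a field `F` under `k` -/
  Var : (F : Type) → [Field F] → (k →+* F) → Type 1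
  /-- closed points of a variety -/
  Pt : ∀ {F : Type} [Field F] {ιF : k →+* F}, Var F ιF → Type
  /-- the degree `[κ(x) : F]` of a closed point -/
  ptDeg : ∀ {F : Type} [Field F] {ιF : k →+* F} {X : Var F ιF}, Pt X → ℕ
  ptDeg_pos : ∀ {F : Type} [Field F] {ιF : k →+* F} {X : Var F ιF} (x : Pt X), 0 < ptDeg x
  /-- rational points -/
  rpt : ∀ {F : Type} [Field F] {ιF : k →+* F}, Var F ιF → Type
  /-- a rational point is a closed point (of degree 1) -/
  rptToPt : ∀ {F : Type} [Field F] {ιF : k →+* F} {X : Var F ιF}, rpt X → Pt X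
  rptDeg : ∀ {F : Type} [Field F] {ιF : k →+* F} {X : Var F ιF} (x : rpt X),
    ptDeg (rptToPt x) = 1
  /-- the elementary `R`-relation on rational points (being connected by a chain of opens
  of `𝐏¹`) -/
  relem : ∀ {F : Type} [Field F] {ιF : k →+* F} (X : Var F ιF), rpt X → rpt X → Prop
  /-- the Chow group of zero-cycles modulo rational equivalence -/
  CH0 : ∀ {F : Type} [Field F] {ιF : k →+* F}, Var F ιF → Type
  [ab : ∀ {F : Type} [Field F] {ιF : k →+* F} (X : Var F ιF), AddCommGroup (CH0 X)]
  /-- the class in `CH₀` of a zero-cycle (a finite `ℤ`-combination of closed points) -/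
  cl : ∀ {F : Type} [Field F] {ιF : k →+* F} {X : Var F ιF}, (Pt X →₀ ℤ) →+ CH0 X
  cl_surjective : ∀ {F : Type} [Field F] {ιF : k →+* F} (X : Var F ιF),
    Function.Surjective (cl (X := X))
  /-- `R`-equivalent rational points are rationally equivalent -/
  cl_relem : ∀ {F : Type} [Field F] {ιF : k →+* F} (X : Var F ιF) (x y : rpt X),
    relem X x y → cl (Finsupp.single (rptToPt x) 1) = cl (Finsupp.single (rptToPt y) 1)
  /-- the degree map on `CH₀` -/
  deg : ∀ {F : Type} [Field F] {ιF : k →+* F} {X : Var F ιF}, CH0 X →+ ℤ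
  deg_cl : ∀ {F : Type} [Field F] {ιF : k →+* F} {X : Var F ιF} (z : Pt X →₀ ℤ),
    deg (cl z) = z.sum fun x n => n * (ptDeg x : ℤ)
  /-- extension of scalars along an extension of the base field -/
  bc : ∀ {F F' : Type} [Field F] [Field F'] {ιF : k →+* F} {ιF' : k →+* F'}
    (e : F →+* F'), e.comp ιF = ιF' → Var F ιF → Var F' ιF'
  /-- flat pullback along the projection `X_{F'} → X` -/
  pull : ∀ {F F' : Type} [Field F] [Field F'] {ιF : k →+* F} {ιF' : k →+* F'}
    (e : F →+* F') (he : e.comp ιF = ιF') (X : Var F ιF), CH0 X →+ CH0 (bc e he X)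
  /-- proper pushforward along the projection `X_{F'} → X`, for `F'/F` finite -/
  push : ∀ {F F' : Type} [Field F] [Field F'] {ιF : k →+* F} {ιF' : k →+* F'}
    (e : F →+* F') (he : e.comp ιF = ιF') (X : Var F ιF), CH0 (bc e he X) →+ CH0 X
  /-- pullback preserves degrees -/
  deg_pull : ∀ {F F' : Type} [Field F] [Field F'] {ιF : k →+* F} {ιF' : k →+* F'}
    (e : F →+* F') (he : e.comp ιF = ιF') (X : Var F ιF) (z : CH0 X),
    deg (pull e he X z) = deg z
  /-- pushforward multiplies degrees by `[F' : F]` -/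
  deg_push : ∀ {F F' : Type} [Field F] [Field F'] {ιF : k →+* F} {ιF' : k →+* F'}
    (e : F →+* F') (he : e.comp ιF = ιF') (X : Var F ιF) (z : CH0 (bc e he X)),
    deg (push e he X z) =
      (@Module.finrank F F' _ _ (RingHom.toAlgebra e).toModule : ℤ) * deg z

attribute [instance] ZeroCycleTheory.ab

/-- The reduced Chow group `A₀(X) ⊆ CH₀(X)`: classes of zero-cycles of degree zero. -/
def ZeroCycleTheory.A0 {k : Type} [Field k] (Z : ZeroCycleTheory k) {F : Type} [Field F]
    {ιF : k →+* F} (X : Z.Var F ιF) : AddSubgroup (Z.CH0 X) :=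
  (Z.deg (X := X)).ker

/-- Auxiliary arithmetic lemma (two-generator numerical semigroup / Frobenius bound):
if `T₁` is at least `β₁ * (β₁ + 1)` then `T₁` is a nonnegative combination of
`β₁ + 1` and `β₁`. -/
private lemma aux_frobenius (β₁ T₁ : ℤ) (hβ : 0 ≤ β₁) (hT : β₁ * (β₁ + 1) ≤ T₁) :
    ∃ a b : ℤ, 0 ≤ a ∧ 0 ≤ b ∧ a * (β₁ + 1) + b * β₁ = T₁ := by
  rcases hβ.lt_or_eq with h0 | h0
  · refine ⟨T₁ % β₁, T₁ / β₁ - T₁ % β₁, Int.emod_nonneg _ h0.ne', ?_, ?_⟩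
    · have h1 : T₁ % β₁ < β₁ := Int.emod_lt_of_pos _ h0
      have h2 : β₁ ≤ T₁ / β₁ := (Int.le_ediv_iff_mul_le h0).mpr (by nlinarith)
      omega
    · have h3 := Int.mul_ediv_add_emod T₁ β₁
      ring_nf
      ring_nf at h3
      linarith
  · subst h0
    exact ⟨T₁, 0, by linarith, le_refl 0, by ring⟩


set_option maxHeartbeats 1000000 in
/-- **Proposition 12, (i) ⟹ (ii)** of Colliot-Thélène's article.

Let `k` be a `p`-adic field and `X` a smooth projective rationally connected `k`-variety
(rational connectedness being expressed, in characteristic zero, by chain rational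
connectedness: `X(Ω)/R` is a single point for every algebraically closed `Ω ⊇ k`).  If the
group `A₀(X)` is finite, then there is an integer `m ≥ 1` such that every zero-cycle on `X`
of degree at least `m` is rationally equivalent to an effective zero-cycle. -/
theorem effective_of_large_degree_of_A0_finite
    (p : ℕ) [Fact p.Prime]
    (k : Type) [Field k] [Algebra ℚ_[p] k] [FiniteDimensional ℚ_[p] k]
    (Z : ZeroCycleTheory k)
    (X : Z.Var k (RingHom.id k))
    (hRC : ∀ (Ω : Type) [Field Ω] [IsAlgClosed Ω] (ιΩ : k →+* Ω)
      (x y : Z.rpt (Z.bc ιΩ (RingHom.comp_id ιΩ) X)),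
      Relation.EqvGen (Z.relem (Z.bc ιΩ (RingHom.comp_id ιΩ) X)) x y)
    (hfin : Finite (Z.A0 X)) :
    ∃ m : ℕ, 1 ≤ m ∧ ∀ c : Z.Pt X →₀ ℤ,
      (m : ℤ) ≤ (c.sum fun x n => n * (Z.ptDeg x : ℤ)) →
      ∃ c' : Z.Pt X →₀ ℤ, (∀ x, 0 ≤ c' x) ∧ Z.cl c' = Z.cl c := by
  classical
  have _inst := Fintype.ofFinite (Z.A0 X)
  -- the degree of a zero-cycle
  set degc : (Z.Pt X →₀ ℤ) →+ ℤ := (Z.deg (X := X)).comp (Z.cl (X := X)) with hdegc_def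
  have hdegc : ∀ c : Z.Pt X →₀ ℤ, degc c = c.sum fun x n => n * (Z.ptDeg x : ℤ) :=
    fun c => Z.deg_cl c
  have hdegcl : ∀ cz : Z.Pt X →₀ ℤ, Z.deg (Z.cl cz) = degc cz := fun _ => rfl
  have hrange : ∀ cz : Z.Pt X →₀ ℤ, degc cz ∈ degc.range := fun cz => ⟨cz, rfl⟩
  clear_value degc
  -- positive part of a zero-cycle
  set pp : (Z.Pt X →₀ ℤ) → (Z.Pt X →₀ ℤ) :=
    fun c => c.mapRange (fun n => max n 0) (by simp) with hpp_def
  have pp_apply : ∀ (c : Z.Pt X →₀ ℤ) (x), pp c x = max (c x) 0 := fun c x => rfl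
  have pp_nonneg : ∀ (c : Z.Pt X →₀ ℤ) (x), 0 ≤ pp c x := fun c x => by
    rw [pp_apply]; exact le_max_right _ _
  have pp_sub : ∀ c : Z.Pt X →₀ ℤ, pp c - pp (-c) = c := by
    intro c; ext x
    simp only [Finsupp.sub_apply, pp_apply, Finsupp.neg_apply]
    omega
  clear_value pp
  have degc_nonneg : ∀ e : Z.Pt X →₀ ℤ, (∀ x, 0 ≤ e x) → 0 ≤ degc e := by
    intro e he
    rw [hdegc]
    exact Finset.sum_nonneg fun x _ => mul_nonneg (he x) (Int.natCast_nonneg _)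
  -- the subgroup of ℤ of degrees of zero-cycles is cyclic
  obtain ⟨g, hg⟩ := Int.subgroup_cyclic degc.range
  have hmem : ∀ cz : Z.Pt X →₀ ℤ, g ∣ degc cz := by
    intro cz
    have h1 : degc cz ∈ degc.range := hrange cz
    rw [hg, AddSubgroup.mem_closure_singleton] at h1
    obtain ⟨n, hn⟩ := h1
    exact ⟨n, by rw [← hn]; simp [mul_comm]⟩
  by_cases hg0 : g = 0
  · -- degenerate case: every zero-cycle has degree 0
    refine ⟨1, le_refl 1, fun c hc => absurd hc ?_⟩
    obtain ⟨n, hn⟩ := hmem c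
    rw [hg0, zero_mul] at hn
    rw [← hdegc, hn]
    omega
  -- main case: choose a zero-cycle of degree `d = |g| > 0`
  have hgrange : g ∈ degc.range := by
    rw [hg]; exact AddSubgroup.subset_closure (Set.mem_singleton g)
  obtain ⟨zg, hzg⟩ := hgrange
  obtain ⟨z0, hz0⟩ : ∃ z0 : Z.Pt X →₀ ℤ, degc z0 = |g| := by
    rcases abs_choice g with h | h
    · exact ⟨zg, hzg.trans h.symm⟩
    · exact ⟨-zg, by rw [map_neg, hzg]; exact h.symm⟩
  set d : ℤ := |g| with hd_def
  have hd : 0 < d := abs_pos.mpr hg0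
  have hdvd : ∀ cz : Z.Pt X →₀ ℤ, d ∣ degc cz := fun cz => (abs_dvd g _).mpr (hmem cz)
  -- the degrees of the positive and negative parts of `z0`
  set β : ℤ := degc (pp (-z0)) with hβ_def
  have hβ0 : 0 ≤ β := degc_nonneg _ (pp_nonneg _)
  have hαβ : degc (pp z0) = β + d := by
    have h1 : degc (pp z0 - pp (-z0)) = d := by rw [pp_sub]; exact hz0
    rw [map_sub] at h1
    omega
  obtain ⟨β₁, hβ₁⟩ : d ∣ β := hdvd _
  have hβ₁0 : 0 ≤ β₁ := by nlinarith
  -- representatives of the classes in `A₀(X)`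
  choose w hw using fun a : Z.A0 X => Z.cl_surjective X a.1
  set V : Z.Pt X →₀ ℤ := ∑ a : Z.A0 X, pp (-(w a)) with hV_def
  have hVnn : ∀ x, 0 ≤ V x := by
    intro x
    rw [hV_def, Finsupp.finset_sum_apply]
    exact Finset.sum_nonneg fun a _ => pp_nonneg _ x
  set s : ℤ := degc V with hs_def
  have hs0 : 0 ≤ s := degc_nonneg _ hVnn
  -- the bound
  have hm0 : (1 : ℤ) ≤ s + (β₁ * (β₁ + 1) + 1) * d := by nlinarith
  refine ⟨(s + (β₁ * (β₁ + 1) + 1) * d).toNat, by omega, fun c hc => ?_⟩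
  have hmc : (((s + (β₁ * (β₁ + 1) + 1) * d).toNat : ℤ)) = s + (β₁ * (β₁ + 1) + 1) * d :=
    Int.toNat_of_nonneg (by omega)
  rw [hmc, ← hdegc] at hc
  -- the degree to be realized by a combination of the parts of `z0`
  set T : ℤ := degc c - s with hT_def
  obtain ⟨T₁, hT₁⟩ : d ∣ T := by
    rw [hT_def]
    exact dvd_sub (hdvd c) (hdvd V)
  have hT₁large : β₁ * (β₁ + 1) ≤ T₁ := by
    have h1 : (β₁ * (β₁ + 1) + 1) * d ≤ T := by omega
    rw [hT₁] at h1
    nlinarith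
  obtain ⟨a, b, ha, hb, hab⟩ := aux_frobenius β₁ T₁ hβ₁0 hT₁large
  -- the effective cycle `E` of degree `T`
  set E : Z.Pt X →₀ ℤ := a • pp z0 + b • pp (-z0) with hE_def
  have hEnn : ∀ x, 0 ≤ E x := by
    intro x
    rw [hE_def]
    simp only [Finsupp.add_apply, Finsupp.smul_apply, smul_eq_mul]
    have := pp_nonneg z0 x
    have := pp_nonneg (-z0) x
    positivity
  have hdegE : degc E = T := by
    rw [hE_def, map_add, AddMonoidHom.map_zsmul, AddMonoidHom.map_zsmul,
      smul_eq_mul, smul_eq_mul, hαβ, ← hβ_def, hβ₁, hT₁]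
    nlinarith [hab]
  -- the class `k'` lies in `A₀(X)`
  have hk' : Z.cl c - Z.cl V - Z.cl E ∈ Z.A0 X := by
    have h1 : Z.deg (Z.cl c - Z.cl V - Z.cl E) = degc c - degc V - degc E := by
      rw [map_sub, map_sub, hdegcl, hdegcl, hdegcl]
    show Z.deg _ = 0
    rw [h1, hdegE]
    omega
  set K : Z.A0 X := ⟨Z.cl c - Z.cl V - Z.cl E, hk'⟩ with hK_def
  have hwK : Z.cl (w K) = Z.cl c - Z.cl V - Z.cl E := hw K
  -- assemble the effective cycle
  refine ⟨pp (w K) + (∑ a ∈ Finset.univ.erase K, pp (-(w a))) + E, ?_, ?_⟩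
  · intro x
    simp only [Finsupp.add_apply, Finsupp.finset_sum_apply]
    have h1 : 0 ≤ ∑ a ∈ Finset.univ.erase K, (pp (-(w a))) x :=
      Finset.sum_nonneg fun a _ => pp_nonneg _ x
    have h2 := pp_nonneg (w K) x
    have h3 := hEnn x
    omega
  · have hVsplit : pp (-(w K)) + ∑ a ∈ Finset.univ.erase K, pp (-(w a)) = V :=
      Finset.add_sum_erase _ _ (Finset.mem_univ K)
    have e1 : Z.cl (∑ a ∈ Finset.univ.erase K, pp (-(w a)))
        = Z.cl V - Z.cl (pp (-(w K))) := by
      rw [← hVsplit, map_add]; abel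
    have key : Z.cl (pp (w K)) - Z.cl (pp (-(w K))) = Z.cl c - Z.cl V - Z.cl E := by
      rw [← map_sub, pp_sub]; exact hwK
    rw [map_add, map_add, e1]
    have h5 : Z.cl (pp (w K)) = Z.cl c - Z.cl V - Z.cl E + Z.cl (pp (-(w K))) := by
      rw [← key]; abel
    rw [h5]
    abel
end
end
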